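/- arXiv:1612.05815 — 2 statements merged into one kernel-verified Lean document; each statement's English description precedes it below -/
import Mathlib

section
/- For the Lie superalgebra $\mathfrak{gl}(1|1)$ model: let $R = \{ f \in \mathbb{Z}[x^{\pm 1}, y^{\pm 1}] : f|_{x = y = t} \text{ is independent of } t \}$ (the supercharacter ring of $GL(1|1)$). Then the kernel of the ring homomorphism $f \mapsto f|_{x = y = 1}$, $R \to \mathbb{Z}$, is the free abelian group with basis $\{ (1 - x^{-1} y)\, x^a y^b : a, b \in \mathbb{Z} \}$. -/
/-- The Laurent polynomial ring `ℤ[x^{±1}, y^{±1}]`, as the group algebra of `ℤ × ℤ`. -/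
abbrev Laur11 : Type := AddMonoidAlgebra ℤ (ℤ × ℤ)

/-- The substitution `x = y = t`: the ring homomorphism to `ℤ[t^{±1}]` adding exponents. -/
noncomputable def subT11 : Laur11 →+* AddMonoidAlgebra ℤ ℤ :=
  AddMonoidAlgebra.mapDomainRingHom ℤ
    (AddMonoidHom.mk' (fun p : ℤ × ℤ => p.1 + p.2) (by intro p q; simp; ring))

/-- The supercharacter ring of `GL(1|1)`: Laurent polynomials `f` for which `f|_{x=y=t}` is
independent of `t`, i.e. `f|_{x=y=t}` is a constant. -/
def R11 : Set Laur11 :=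
  {f | ∃ c : ℤ, subT11 f = AddMonoidAlgebra.single (0 : ℤ) c}

/-- The evaluation `f ↦ f|_{x=y=1}` as a ring homomorphism `ℤ[x^{±1},y^{±1}] → ℤ`. -/
noncomputable def ev11 : Laur11 →+* ℤ :=
  ((AddMonoidAlgebra.lift ℤ ℤ (ℤ × ℤ)) 1).toRingHom

/-- The elements `(1 - x⁻¹ y) xᵃ yᵇ`, the supercharacters of Kac modules for `𝔤𝔩(1|1)`. -/
noncomputable def kac11 (p : ℤ × ℤ) : Laur11 :=
  (1 - AddMonoidAlgebra.single ((-1, 1) : ℤ × ℤ) (1 : ℤ)) *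
    AddMonoidAlgebra.single p (1 : ℤ)

/- ### Auxiliary lemmas -/

lemma subT11_single (p : ℤ × ℤ) (c : ℤ) :
    subT11 (AddMonoidAlgebra.single p c) = AddMonoidAlgebra.single (p.1 + p.2) c := by
  simp [subT11]

lemma ev11_single (p : ℤ × ℤ) (c : ℤ) : ev11 (AddMonoidAlgebra.single p c) = c := by
  simp [ev11, AddMonoidAlgebra.lift_single]

lemma kac11_eq (p : ℤ × ℤ) :
    kac11 p = AddMonoidAlgebra.single p 1 - AddMonoidAlgebra.single (p + (-1, 1)) 1 := by
  simp [kac11, sub_mul, AddMonoidAlgebra.single_mul_single, add_comm]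

lemma sub_delta (q : ℤ × ℤ) : q - ((-1 : ℤ), (1 : ℤ)) = (q.1 + 1, q.2 - 1) := by
  cases q with
  | mk a b => rw [Prod.mk_sub_mk]; simp [sub_neg_eq_add]

lemma evA_single (a c : ℤ) :
    ((AddMonoidAlgebra.lift ℤ ℤ ℤ) 1).toRingHom (AddMonoidAlgebra.single a c) = c := by
  show (AddMonoidAlgebra.lift ℤ ℤ ℤ) 1 (AddMonoidAlgebra.single a c) = c
  rw [AddMonoidAlgebra.lift_single]
  simp

lemma single_zero_eq_zero : (AddMonoidAlgebra.single (0 : ℤ) (0 : ℤ) : AddMonoidAlgebra ℤ ℤ) = 0 := by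
  simp [AddMonoidAlgebra.single]

lemma comb_apply (T : Finset (ℤ × ℤ)) (c : ℤ × ℤ → ℤ) (p : ℤ × ℤ) :
    (∑ q ∈ T, c q • kac11 q).coeff p
      = (if p ∈ T then c p else 0)
        - (if p - (-1, 1) ∈ T then c (p - (-1, 1)) else 0) := by
  classical
  have h1 : (∑ q ∈ T, c q • kac11 q).coeff p = ∑ q ∈ T, c q * ((kac11 q).coeff p) := by
    induction T using Finset.cons_induction with
    | empty => simp
    | cons a s ha ih =>
        rw [Finset.sum_cons, Finset.sum_cons, ← ih, AddMonoidAlgebra.coeff_add, Finsupp.add_apply, AddMonoidAlgebra.coeff_smul, Finsupp.smul_apply,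
          smul_eq_mul]
  rw [h1]
  have h2 : ∀ q ∈ T, c q * ((kac11 q).coeff p)
      = (if q = p then c q else 0) - (if q = p - (-1, 1) then c q else 0) := by
    intro q _
    rw [kac11_eq, AddMonoidAlgebra.coeff_sub, Finsupp.sub_apply, AddMonoidAlgebra.coeff_single,
      AddMonoidAlgebra.coeff_single, Finsupp.single_apply, Finsupp.single_apply]
    have hiff : (q + ((-1 : ℤ), (1 : ℤ)) = p) ↔ (q = p - (-1, 1)) := eq_sub_iff_add_eq.symm
    rw [if_congr hiff rfl rfl]
    split_ifs <;> ring
  rw [Finset.sum_congr rfl h2, Finset.sum_sub_distrib,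
    Finset.sum_ite_eq' T p c, Finset.sum_ite_eq' T (p - (-1, 1)) c]

lemma kac11_linearIndependent : LinearIndependent ℤ kac11 := by
  classical
  rw [linearIndependent_iff]
  intro l hl
  have key : ∀ p : ℤ × ℤ, l p = l (p - (-1, 1)) := by
    intro p
    have h0 : (Finsupp.linearCombination ℤ kac11 l).coeff p = 0 := by rw [hl]; rfl
    rw [Finsupp.linearCombination_apply, Finsupp.sum, comb_apply l.support l p] at h0
    have hs : ∀ q : ℤ × ℤ, (if q ∈ l.support then l q else 0) = l q := by
      intro q
      by_cases h : q ∈ l.support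
      · simp [h]
      · simp [h, Finsupp.notMem_support_iff.1 h]
    rw [hs, hs] at h0
    linarith [h0]
  have key' : ∀ a b : ℤ, l (a, b) = l (a + 1, b - 1) := by
    intro a b
    have := key (a, b)
    rwa [sub_delta] at this
  have chain : ∀ (k : ℕ) (a b : ℤ), l (a, b) = l (a + k, b - k) := by
    intro k
    induction k with
    | zero => intro a b; simp
    | succ k ih =>
        intro a b
        rw [ih a b, key' (a + k) (b - k)]
        have e : ((a + (k : ℤ)) + 1, (b - (k : ℤ)) - 1)
            = (a + ((k + 1 : ℕ) : ℤ), b - ((k + 1 : ℕ) : ℤ)) := by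
          rw [Prod.mk.injEq]; constructor <;> push_cast <;> ring
        rw [e]
  ext p
  rw [Finsupp.coe_zero, Pi.zero_apply]
  by_cases hsupp : l.support.Nonempty
  · set B := (l.support.image Prod.fst).max' (hsupp.image _) with hB
    set k := (B + 1 - p.1).toNat with hk
    have hbig : ¬ ((p.1 + (k : ℤ), p.2 - (k : ℤ)) ∈ l.support) := by
      intro hmem
      have h1 : (p.1 + (k : ℤ), p.2 - (k : ℤ)).1 ∈ l.support.image Prod.fst :=
        Finset.mem_image_of_mem _ hmem
      have h2 : p.1 + (k : ℤ) ≤ B := Finset.le_max' _ _ h1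
      have h3 : (B + 1 - p.1 : ℤ) ≤ ((B + 1 - p.1).toNat : ℤ) := Int.self_le_toNat _
      omega
    have : l (p.1 + (k : ℤ), p.2 - (k : ℤ)) = 0 := Finsupp.notMem_support_iff.1 hbig
    have hp : l p = l (p.1 + (k : ℤ), p.2 - (k : ℤ)) := by
      have := chain k p.1 p.2
      simpa using this
    rw [hp, this]
  · have : l = 0 := by
      ext q
      by_contra hq
      exact hsupp ⟨q, Finsupp.mem_support_iff.2 (by simpa using hq)⟩
    simp [this]

lemma mem_span_of_subT11_eq_zero (f : Laur11) (hf : subT11 f = 0) :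
    f ∈ Submodule.span ℤ (Set.range kac11) := by
  classical
  by_cases h0 : f = 0
  · rw [h0]; exact Submodule.zero_mem _
  -- fiber sums vanish
  have hmd : ∀ n : ℤ, (subT11 f).coeff n = ∑ p ∈ f.coeff.support, if p.1 + p.2 = n then f.coeff p else 0 := by
    intro n
    have hrfl : (subT11 f).coeff = Finsupp.mapDomain (fun p : ℤ × ℤ => p.1 + p.2) f.coeff := rfl
    rw [hrfl]
    unfold Finsupp.mapDomain
    rw [Finsupp.sum_apply, Finsupp.sum]
    exact Finset.sum_congr rfl fun p _ => Finsupp.single_apply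
  have hfib : ∀ n : ℤ, ∑ p ∈ f.coeff.support, (if p.1 + p.2 = n then f.coeff p else 0) = 0 := by
    intro n
    rw [← hmd n, hf]
    rfl
  -- partial fiber sums
  set S : ℤ → ℤ → ℤ := fun n b =>
    ∑ p ∈ f.coeff.support, (if p.1 + p.2 = n ∧ p.2 ≤ b then f.coeff p else 0) with hS
  have hB : ∀ n b : ℤ, S n b - S n (b - 1) = f.coeff (n - b, b) := by
    intro n b
    rw [hS]
    simp only []
    rw [← Finset.sum_sub_distrib]
    have hpt : ∀ p ∈ f.coeff.support,
        ((if p.1 + p.2 = n ∧ p.2 ≤ b then f.coeff p else 0)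
          - (if p.1 + p.2 = n ∧ p.2 ≤ b - 1 then f.coeff p else 0))
        = (if p = (n - b, b) then f.coeff p else 0) := by
      intro p _
      by_cases hpq : p = (n - b, b)
      · rw [hpq]
        rw [if_pos rfl, if_pos (by constructor <;> simp), if_neg (by simp)]
        ring
      · rw [if_neg hpq]
        have hne : ¬ (p.1 = n - b ∧ p.2 = b) := by
          intro h
          exact hpq (Prod.ext_iff.2 ⟨h.1, h.2⟩)
        split_ifs with h1 h2 h2
        · ring
        · exfalso; omega
        · exfalso; omega
        · ring
    rw [Finset.sum_congr rfl hpt, Finset.sum_ite_eq' f.coeff.support ((n - b, b) : ℤ × ℤ) f.coeff]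
    by_cases h : ((n - b, b) : ℤ × ℤ) ∈ f.coeff.support
    · rw [if_pos h]
    · rw [if_neg h, Finsupp.notMem_support_iff.1 h]
  have hCi : ∀ n b : ℤ, (∀ p ∈ f.coeff.support, p.2 ≤ b) → S n b = 0 := by
    intro n b hball
    show (∑ p ∈ f.coeff.support, if p.1 + p.2 = n ∧ p.2 ≤ b then f.coeff p else 0) = 0
    have he : (∑ p ∈ f.coeff.support, if p.1 + p.2 = n ∧ p.2 ≤ b then f.coeff p else 0)
        = ∑ p ∈ f.coeff.support, (if p.1 + p.2 = n then f.coeff p else 0) :=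
      Finset.sum_congr rfl fun p hp => if_congr (and_iff_left (hball p hp)) rfl rfl
    rw [he, hfib n]
  -- bounds
  have hne : f.coeff.support.Nonempty := by
    rw [Finsupp.support_nonempty_iff, Ne, AddMonoidAlgebra.coeff_eq_zero]
    exact h0
  set m : ℤ := (f.coeff.support.image Prod.snd).min' (hne.image _) with hm
  set M : ℤ := (f.coeff.support.image Prod.snd).max' (hne.image _) with hM
  set T : Finset (ℤ × ℤ) :=
    ((f.coeff.support.image fun p => p.1 + p.2) ×ˢ Finset.Icc m M).image fun r => (r.1 - r.2, r.2)
    with hT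
  have hTz : ∀ q : ℤ × ℤ, q ∉ T → S (q.1 + q.2) q.2 = 0 := by
    intro q hq
    by_cases hMq : M ≤ q.2
    · apply hCi
      intro p hp
      have : p.2 ≤ M := Finset.le_max' _ _ (Finset.mem_image_of_mem _ hp)
      omega
    · by_contra hSne
      have hnef : (f.coeff.support.filter fun p => p.1 + p.2 = q.1 + q.2 ∧ p.2 ≤ q.2).Nonempty := by
        rw [Finset.filter_nonempty_iff]
        by_contra hno
        push_neg at hno
        apply hSne
        rw [hS]
        simp only []
        apply Finset.sum_eq_zero
        intro p hp
        rw [if_neg]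
        intro hcond
        exact absurd hcond.2 (not_le.2 (hno p hp hcond.1))
      obtain ⟨p, hp⟩ := hnef
      rw [Finset.mem_filter] at hp
      apply hq
      rw [hT]
      apply Finset.mem_image.2
      refine ⟨(q.1 + q.2, q.2), ?_, ?_⟩
      · apply Finset.mem_product.2
        constructor
        · exact Finset.mem_image.2 ⟨p, hp.1, hp.2.1⟩
        · apply Finset.mem_Icc.2
          have hm' : m ≤ p.2 := Finset.min'_le _ _ (Finset.mem_image_of_mem _ hp.1)
          constructor
          · omega
          · omega
      · exact Prod.ext_iff.2 ⟨by simp, rfl⟩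
  have hkey : f = ∑ q ∈ T, S (q.1 + q.2) q.2 • kac11 q := by
    ext p
    rw [comb_apply T (fun q => S (q.1 + q.2) q.2) p]
    have e1 : (if p ∈ T then S (p.1 + p.2) p.2 else 0) = S (p.1 + p.2) p.2 := by
      by_cases h : p ∈ T
      · rw [if_pos h]
      · rw [if_neg h, hTz p h]
    have e2 : (if p - (-1, 1) ∈ T
          then S ((p - ((-1 : ℤ), (1 : ℤ))).1 + (p - ((-1 : ℤ), (1 : ℤ))).2)
            (p - ((-1 : ℤ), (1 : ℤ))).2 else 0)
        = S (p.1 + p.2) (p.2 - 1) := by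
      have hn : (p - ((-1 : ℤ), (1 : ℤ))).1 + (p - ((-1 : ℤ), (1 : ℤ))).2 = p.1 + p.2 := by
        simp
      have hb : (p - ((-1 : ℤ), (1 : ℤ))).2 = p.2 - 1 := by rw [sub_delta]
      rw [hn, hb]
      by_cases h : p - ((-1 : ℤ), (1 : ℤ)) ∈ T
      · rw [if_pos h]
      · rw [if_neg h]
        have := hTz _ h
        rw [hn, hb] at this
        rw [this]
    rw [e1, e2, hB (p.1 + p.2) p.2]
    have : ((p.1 + p.2 - p.2, p.2) : ℤ × ℤ) = p := Prod.ext_iff.2 ⟨by ring, rfl⟩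
    rw [this]
  rw [hkey]
  exact Submodule.sum_mem _ fun q _ =>
    Submodule.smul_mem _ _ (Submodule.subset_span ⟨q, rfl⟩)

lemma ev11_eq_lift_subT11 (f : Laur11) :
    ev11 f = ((AddMonoidAlgebra.lift ℤ ℤ ℤ) 1).toRingHom (subT11 f) := by
  induction f using AddMonoidAlgebra.induction_linear with
  | zero => simp
  | add g h ihg ihh =>
      rw [map_add, map_add, map_add, ihg, ihh]
  | single p c =>
      show ev11 (AddMonoidAlgebra.single p c)
        = ((AddMonoidAlgebra.lift ℤ ℤ ℤ) 1).toRingHom (subT11 (AddMonoidAlgebra.single p c))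
      rw [ev11_single, subT11_single, evA_single]

/-- the kernel of the evaluation `f ↦ f|_{x=y=1}` on the supercharacter ring
`R` of `GL(1|1)` is the free abelian group with basis `{(1 - x⁻¹y) xᵃ yᵇ : a, b ∈ ℤ}`. -/
theorem kernel_gl11 :
    (∀ p : ℤ × ℤ, kac11 p ∈ R11 ∧ ev11 (kac11 p) = 0) ∧
    LinearIndependent ℤ kac11 ∧
    (∀ f ∈ R11, ev11 f = 0 → f ∈ Submodule.span ℤ (Set.range kac11)) := by
  refine ⟨fun p => ⟨⟨0, ?_⟩, ?_⟩, kac11_linearIndependent, fun f hf hev => ?_⟩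
  · rw [kac11_eq, map_sub, subT11_single, subT11_single]
    have : (p + ((-1 : ℤ), (1 : ℤ))).1 + (p + ((-1 : ℤ), (1 : ℤ))).2 = p.1 + p.2 := by
      show p.1 + -1 + (p.2 + 1) = p.1 + p.2
      ring
    rw [this, sub_self]
    exact single_zero_eq_zero.symm
  · rw [kac11_eq, map_sub, ev11_single, ev11_single, sub_self]
  · obtain ⟨c, hc⟩ := hf
    have hc0 : c = 0 := by
      have h1 := ev11_eq_lift_subT11 f
      rw [hev, hc] at h1
      rw [evA_single] at h1
      exact h1.symm
    rw [hc0, single_zero_eq_zero] at hc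
    exact mem_span_of_subT11_eq_zero f hc
end

section
/- Kernel of the Duflo–Serganova evaluation for $GL(m|n)$: let $\mathcal{J}_{m,n}$ be the ring of $S_m\times S_n$-invariant Laurent polynomials $f$ in $x_1,\ldots,x_m,y_1,\ldots,y_n$ with $f|_{x_1=y_1=t}$ independent of $t$. If $f \in \mathcal{J}_{m,n}$ satisfies $f|_{x_1 = y_1 = 1} = 0$, then $f$ is divisible in the Laurent polynomial ring by $\prod_{i=1}^m \prod_{j=1}^n (1 - x_i^{-1} y_j)$, and the quotient is an $S_m \times S_n$-invariant Laurent polynomial. -/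
/-- The exponent lattice for Laurent polynomials in `x₁,…,x_m, y₁,…,y_n`. -/
abbrev XLat (m n : ℕ) : Type := (Fin m ⊕ Fin n) → ℤ

/-- The Laurent polynomial ring `ℤ[x₁^{±1},…,x_m^{±1},y₁^{±1},…,y_n^{±1}]`,
realized as the group algebra of the exponent lattice. -/
abbrev Laur (m n : ℕ) : Type := AddMonoidAlgebra ℤ (XLat m n)

/-- The action of a pair of permutations `(σ, τ) ∈ S_m × S_n` on Laurent polynomials,
permuting the `x` variables by `σ` and the `y` variables by `τ`. -/
noncomputable def permHom {m n : ℕ} (σ : Equiv.Perm (Fin m)) (τ : Equiv.Perm (Fin n)) :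
    Laur m n →+* Laur m n :=
  AddMonoidAlgebra.mapDomainRingHom ℤ
    (AddMonoidHom.mk' (fun v : XLat m n => v ∘ (Equiv.sumCongr σ τ)) (fun _ _ => rfl))

/-- A Laurent polynomial is doubly symmetric if it is invariant under permuting
the `x`'s among themselves and the `y`'s among themselves. -/
def IsSym {m n : ℕ} (f : Laur m n) : Prop :=
  ∀ (σ : Equiv.Perm (Fin m)) (τ : Equiv.Perm (Fin n)), permHom σ τ f = f

/-- The additive map on exponents corresponding to the substitution `x_i = y_j = t`:
the `t`-exponent is `v(x_i) + v(y_j)`, and the exponents of `x_i`, `y_j` are set to zero. -/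
noncomputable def subTexp (m n : ℕ) (i : Fin m) (j : Fin n) : XLat m n →+ ℤ × XLat m n :=
  AddMonoidHom.mk'
    (fun v => (v (Sum.inl i) + v (Sum.inr j),
      fun a => if a = Sum.inl i ∨ a = Sum.inr j then 0 else v a))
    (by
      intro v w
      refine Prod.ext ?_ ?_
      · simp only [Pi.add_apply, Prod.fst_add]; ring
      · funext a
        by_cases h : a = Sum.inl i ∨ a = Sum.inr j <;> simp [h])

/-- The ring homomorphism substituting `x_i = y_j = t`, with values in the Laurent
polynomial ring with an extra variable `t` (whose exponent is the first coordinate). -/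
noncomputable def subT {m n : ℕ} (i : Fin m) (j : Fin n) :
    Laur m n →+* AddMonoidAlgebra ℤ (ℤ × XLat m n) :=
  AddMonoidAlgebra.mapDomainRingHom ℤ (subTexp m n i j)

/-- The inclusion of Laurent polynomials not involving `t` into the ring with `t`. -/
noncomputable def inclT (m n : ℕ) : Laur m n →+* AddMonoidAlgebra ℤ (ℤ × XLat m n) :=
  AddMonoidAlgebra.mapDomainRingHom ℤ (AddMonoidHom.inr ℤ (XLat m n))

/-- The supersymmetry condition: the substitution `x_i = y_j = t` is independent of `t`,
i.e. the result lies in the subring of elements not involving `t`. -/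
def SuperCond {m n : ℕ} (f : Laur m n) : Prop :=
  ∀ (i : Fin m) (j : Fin n), subT i j f ∈ Set.range (inclT m n)

/-- The ring `𝒥_{m,n}` of supersymmetric Laurent polynomials, as a set. -/
def Jset (m n : ℕ) : Set (Laur m n) := {f | IsSym f ∧ SuperCond f}

/-- The ring homomorphism `f ↦ f|_{x₁ = y₁ = 1}`, substituting `1` for `x₁` and `y₁`
(realized on exponents by dropping the corresponding coordinates and reindexing the
remaining variables). -/
noncomputable def subOne (m n : ℕ) : Laur (m+1) (n+1) →+* Laur m n :=
  AddMonoidAlgebra.mapDomainRingHom ℤ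
    (AddMonoidHom.mk' (fun v : XLat (m+1) (n+1) => v ∘ Sum.map Fin.succ Fin.succ)
      (fun _ _ => rfl))

/-- The exponent vector of the monomial `x_i^{-1} y_j`. -/
def xinvy {m n : ℕ} (i : Fin m) (j : Fin n) : XLat m n :=
  fun a => if a = Sum.inl i then -1 else if a = Sum.inr j then 1 else 0

open AddMonoidAlgebra

namespace KD
variable {m n : ℕ}

lemma amd_comp {α β γ : Type*} {f : α → β} {g : β → γ} {x : AddMonoidAlgebra ℤ α} :
    AddMonoidAlgebra.mapDomain (g ∘ f) x =
      AddMonoidAlgebra.mapDomain g (AddMonoidAlgebra.mapDomain f x) :=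
  congrArg AddMonoidAlgebra.ofCoeff Finsupp.mapDomain_comp

lemma amd_id {α : Type*} {x : AddMonoidAlgebra ℤ α} :
    AddMonoidAlgebra.mapDomain id x = x :=
  congrArg AddMonoidAlgebra.ofCoeff Finsupp.mapDomain_id

/-- the projection on exponents corresponding to substituting `y_j := x_i`. -/
noncomputable def projE (i : Fin m) (j : Fin n) : XLat m n →+ XLat m n :=
  AddMonoidHom.mk' (fun v => v - v (Sum.inr j) • xinvy i j) (by
    intro v w
    show (v + w) - (v + w) (Sum.inr j) • xinvy i j =
      (v - v (Sum.inr j) • xinvy i j) + (w - w (Sum.inr j) • xinvy i j)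
    rw [Pi.add_apply, add_smul]; abel)

noncomputable def S (i : Fin m) (j : Fin n) : Laur m n →+* Laur m n :=
  AddMonoidAlgebra.mapDomainRingHom ℤ (projE i j)

lemma S_apply (i : Fin m) (j : Fin n) (f : Laur m n) :
    S i j f = AddMonoidAlgebra.mapDomain (projE i j) f := rfl

lemma one_sub_single_dvd (e : XLat m n) (k : ℤ) :
    (1 - single e (1:ℤ)) ∣ (1 - single (k • e) (1:ℤ)) := by
  have key : ∀ N : ℕ, (1 - single e (1:ℤ)) ∣ (1 - single ((N:ℤ) • e) (1:ℤ)) := by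
    intro N
    have h1 : single ((N:ℤ) • e) (1:ℤ) = (single e (1:ℤ))^N := by
      rw [AddMonoidAlgebra.single_pow, one_pow, natCast_zsmul]
    rw [h1]
    simpa using sub_dvd_pow_sub_pow (1 : Laur m n) (single e 1) N
  rcases Int.eq_nat_or_neg k with ⟨N, hN | hN⟩
  · subst hN; exact key N
  · subst hN
    have h2 : (1 - single ((-(N:ℤ)) • e) (1:ℤ)) =
        (- single ((-(N:ℤ)) • e) (1:ℤ)) * (1 - single ((N:ℤ) • e) (1:ℤ)) := by
      rw [neg_mul, mul_sub, mul_one, AddMonoidAlgebra.single_mul_single]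
      rw [neg_smul, neg_add_cancel, mul_one]
      rw [← AddMonoidAlgebra.one_def]
      abel
    rw [h2]
    exact Dvd.dvd.mul_left (key N) _

lemma proj_add_smul (i : Fin m) (j : Fin n) (v : XLat m n) :
    projE i j v + v (Sum.inr j) • xinvy i j = v := by
  show (v - v (Sum.inr j) • xinvy i j) + v (Sum.inr j) • xinvy i j = v
  abel

lemma dvd_sub_S (i : Fin m) (j : Fin n) (f : Laur m n) :
    (1 - single (xinvy i j) (1:ℤ)) ∣ (f - S i j f) := by
  have h1 : f = f.coeff.sum (fun v c => single v c) := (AddMonoidAlgebra.sum_coeff_single f).symm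
  have h2 : S i j f = f.coeff.sum (fun v c => single (projE i j v) c) := by
    conv_lhs => rw [h1]
    rw [map_finsuppSum]; simp only [S_apply, AddMonoidAlgebra.mapDomain_single]
  have h3 : f - S i j f
      = f.coeff.sum (fun v c => single v c - single (projE i j v) c) := by
    rw [Finsupp.sum_sub]; rw [← h1, ← h2]
  rw [h3]
  refine Finset.dvd_sum ?_
  intro v _
  show (1 - single (xinvy i j) (1:ℤ)) ∣ (single v (f.coeff v) - single (projE i j v) (f.coeff v))
  have key : single v (f.coeff v) - single (projE i j v) (f.coeff v) =
      (- single (projE i j v) (f.coeff v)) * (1 - single (v (Sum.inr j) • xinvy i j) (1:ℤ)) := by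
    rw [neg_mul, mul_sub, mul_one, AddMonoidAlgebra.single_mul_single,
      mul_one, proj_add_smul]
    abel
  rw [key]
  exact Dvd.dvd.mul_left (one_sub_single_dvd _ _) _

lemma projE_xinvy (i : Fin m) (j : Fin n) : projE i j (xinvy i j) = 0 := by
  show xinvy i j - xinvy i j (Sum.inr j) • xinvy i j = 0
  have h : xinvy i j (Sum.inr j) = 1 := by simp [xinvy]
  rw [h, one_smul, sub_self]

lemma S_p (i : Fin m) (j : Fin n) :
    S i j (1 - single (xinvy i j) (1:ℤ)) = 0 := by
  rw [map_sub, map_one, S_apply, AddMonoidAlgebra.mapDomain_single, projE_xinvy, sub_eq_zero]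
  exact AddMonoidAlgebra.one_def

lemma one_sub_single_ne_zero (v : XLat m n) (hv : v ≠ 0) :
    (1 : Laur m n) - single v 1 ≠ 0 := by
  intro h
  have h1 : Finsupp.single (0 : XLat m n) (1:ℤ) = Finsupp.single v 1 :=
    congrArg AddMonoidAlgebra.coeff (AddMonoidAlgebra.one_def.symm.trans (sub_eq_zero.mp h))
  rcases (Finsupp.single_eq_single_iff _ _ _ _).mp h1 with ⟨h2, _⟩ | ⟨h2, _⟩
  · exact hv h2.symm
  · exact one_ne_zero h2

lemma xinvy_ne_zero (i : Fin m) (j : Fin n) : xinvy i j ≠ 0 := by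
  intro h
  have := congrFun h (Sum.inr j)
  simp [xinvy] at this

lemma S_eq_zero_of_dvd {i : Fin m} {j : Fin n} {f : Laur m n}
    (h : (1 - single (xinvy i j) (1:ℤ)) ∣ f) : S i j f = 0 := by
  obtain ⟨g, rfl⟩ := h
  rw [map_mul, S_p, zero_mul]

lemma dvd_of_S_eq_zero {i : Fin m} {j : Fin n} {f : Laur m n}
    (h : S i j f = 0) : (1 - single (xinvy i j) (1:ℤ)) ∣ f := by
  have := dvd_sub_S i j f
  rwa [h, sub_zero] at this

lemma prime_p (i : Fin m) (j : Fin n) :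
    Prime (1 - single (xinvy i j) (1:ℤ)) := by
  refine ⟨one_sub_single_ne_zero _ (xinvy_ne_zero i j), ?_, ?_⟩
  · intro hu
    have h2 : IsUnit ((0 : Laur m n)) := by
      have := hu.map (S i j)
      rwa [S_p] at this
    rw [isUnit_zero_iff] at h2
    exact zero_ne_one h2
  · intro a b hab
    have h2 : S i j a * S i j b = 0 := by
      rw [← map_mul]; exact S_eq_zero_of_dvd hab
    rcases mul_eq_zero.mp h2 with h | h
    · exact Or.inl (dvd_of_S_eq_zero h)
    · exact Or.inr (dvd_of_S_eq_zero h)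

lemma not_dvd_p {i k : Fin m} {j l : Fin n} (hne : (i, j) ≠ (k, l)) :
    ¬ (1 - single (xinvy k l) (1:ℤ)) ∣ (1 - single (xinvy i j) (1:ℤ)) := by
  intro hdvd
  have h0 := S_eq_zero_of_dvd hdvd
  rw [map_sub, map_one, S_apply, AddMonoidAlgebra.mapDomain_single] at h0
  have h1 : (1 : Laur m n) - single (projE k l (xinvy i j)) 1 ≠ 0 := by
    apply one_sub_single_ne_zero
    show xinvy i j - xinvy i j (Sum.inr l) • xinvy k l ≠ 0
    by_cases hjl : j = l
    · subst hjl
      have hik : i ≠ k := by simpa using hne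
      intro h
      have := congrFun h (Sum.inl i)
      simp [xinvy, hik, Pi.sub_apply] at this
    · have hlj : l ≠ j := Ne.symm hjl
      have hc : xinvy i j (Sum.inr l) = 0 := by
        simp [xinvy, hlj]
      rw [hc, zero_smul, sub_zero]
      exact xinvy_ne_zero i j
  exact h1 h0

lemma prod_primes_dvd {ι : Type*} {R : Type*} [CommRing R] [NoZeroDivisors R]
    (s : Finset ι) (p : ι → R)
    (hp : ∀ i ∈ s, Prime (p i))
    (hd : ∀ i ∈ s, ∀ j ∈ s, i ≠ j → ¬ p i ∣ p j) :
    ∀ f : R, (∀ i ∈ s, p i ∣ f) → (∏ i ∈ s, p i) ∣ f := by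
  classical
  induction s using Finset.induction_on with
  | empty => intro f _; simp
  | @insert a s ha ih =>
      intro f hdvd
      obtain ⟨g, hg⟩ := hdvd a (Finset.mem_insert_self a s)
      rw [Finset.prod_insert ha, hg]
      refine mul_dvd_mul_left _ ?_
      refine ih (fun i hi => hp i (Finset.mem_insert_of_mem hi))
        (fun i hi j hj hij => hd i (Finset.mem_insert_of_mem hi) j
          (Finset.mem_insert_of_mem hj) hij) g ?_
      intro i hi
      have hpi : Prime (p i) := hp i (Finset.mem_insert_of_mem hi)
      have hia : i ≠ a := fun h => ha (h ▸ hi)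
      have hdi : p i ∣ p a * g := hg ▸ hdvd i (Finset.mem_insert_of_mem hi)
      rcases hpi.dvd_or_dvd hdi with h | h
      · exact absurd h (hd i (Finset.mem_insert_of_mem hi) a
          (Finset.mem_insert_self a s) hia)
      · exact h

section Transfer
-- apply lemmas (definitional)
lemma subT_apply (i : Fin m) (j : Fin n) (f : Laur m n) :
    subT i j f = AddMonoidAlgebra.mapDomain (⇑(subTexp m n i j)) f := rfl

lemma perm_apply (σ : Equiv.Perm (Fin m)) (τ : Equiv.Perm (Fin n)) (f : Laur m n) :
    permHom σ τ f =
      AddMonoidAlgebra.mapDomain (fun v : XLat m n => v ∘ (Equiv.sumCongr σ τ)) f := rfl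

lemma subOne_apply (f : Laur (m+1) (n+1)) :
    subOne m n f =
      AddMonoidAlgebra.mapDomain (fun v : XLat (m+1) (n+1) => v ∘ Sum.map Fin.succ Fin.succ) f := rfl

lemma inclT_apply (g : Laur m n) :
    inclT m n g = AddMonoidAlgebra.mapDomain (⇑(AddMonoidHom.inr ℤ (XLat m n))) g := rfl

lemma subTexp_apply (i : Fin m) (j : Fin n) (v : XLat m n) :
    subTexp m n i j v = (v (Sum.inl i) + v (Sum.inr j),
      fun a => if a = Sum.inl i ∨ a = Sum.inr j then 0 else v a) := rfl

lemma S_of_subT (i : Fin m) (j : Fin n) (f : Laur m n) (h : subT i j f = 0) :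
    S i j f = 0 := by
  classical
  have hcomp : ⇑(projE i j) =
      (fun p : ℤ × XLat m n => fun a => if a = Sum.inl i then p.1
        else if a = Sum.inr j then 0 else p.2 a) ∘ ⇑(subTexp m n i j) := by
    funext v
    funext a
    show v a - v (Sum.inr j) • xinvy i j a = _
    simp only [Function.comp_apply, subTexp_apply, smul_eq_mul]
    by_cases h1 : a = Sum.inl i
    · subst h1
      simp [xinvy]
      try ring
    · by_cases h2 : a = Sum.inr j
      · subst h2
        simp [xinvy, h1]
      · simp [xinvy, h1, h2]
  rw [S_apply, hcomp, amd_comp, ← subT_apply, h, AddMonoidAlgebra.mapDomain_zero]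

lemma subT_perm (σ : Equiv.Perm (Fin m)) (τ : Equiv.Perm (Fin n)) (i : Fin m) (j : Fin n)
    (f : Laur m n) :
    subT i j (permHom σ τ f) =
      AddMonoidAlgebra.mapDomain
        (fun p : ℤ × XLat m n => (p.1, fun a => p.2 (Equiv.sumCongr σ τ a)))
        (subT (σ i) (τ j) f) := by
  classical
  have h1 : ∀ a : Fin m ⊕ Fin n,
      (Equiv.sumCongr σ τ) a = Sum.inl (σ i) ↔ a = Sum.inl i := by
    intro a
    rw [Equiv.apply_eq_iff_eq_symm_apply]
    simp
  have h2 : ∀ a : Fin m ⊕ Fin n,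
      (Equiv.sumCongr σ τ) a = Sum.inr (τ j) ↔ a = Sum.inr j := by
    intro a
    rw [Equiv.apply_eq_iff_eq_symm_apply]
    simp
  rw [perm_apply, subT_apply, subT_apply, ← amd_comp, ← amd_comp]
  congr 1
  funext v
  simp only [Function.comp_apply, subTexp_apply]
  refine Prod.ext ?_ ?_
  · simp
  · funext a
    simp only [h1 a, h2 a, Function.comp_apply]

/-- extension by zero of exponents, inverse to restriction on the relevant subgroup -/
def iota (m n : ℕ) (w : XLat m n) : XLat (m+1) (n+1) := fun a =>
  match a with
  | Sum.inl i => Fin.cases 0 (fun k => w (Sum.inl k)) i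
  | Sum.inr j => Fin.cases 0 (fun k => w (Sum.inr k)) j

lemma subT00_eq_zero (f : Laur (m+1) (n+1)) (hs : SuperCond f) (h0 : subOne m n f = 0) :
    subT (0 : Fin (m+1)) (0 : Fin (n+1)) f = 0 := by
  classical
  obtain ⟨g, hg⟩ := hs 0 0
  have hev_incl :
      AddMonoidAlgebra.mapDomain (Prod.snd : ℤ × XLat (m+1) (n+1) → XLat (m+1) (n+1))
        (inclT (m+1) (n+1) g) = g := by
    rw [inclT_apply, ← amd_comp]
    have hc : (Prod.snd ∘ ⇑(AddMonoidHom.inr ℤ (XLat (m+1) (n+1))))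
        = (id : XLat (m+1) (n+1) → XLat (m+1) (n+1)) := rfl
    rw [hc, amd_id]
  have hev_subT :
      AddMonoidAlgebra.mapDomain (Prod.snd : ℤ × XLat (m+1) (n+1) → XLat (m+1) (n+1))
        (subT (0 : Fin (m+1)) (0 : Fin (n+1)) f)
      = AddMonoidAlgebra.mapDomain (iota m n) (subOne m n f) := by
    rw [subT_apply, subOne_apply, ← amd_comp, ← amd_comp]
    congr 1
    funext v
    funext a
    show (if a = Sum.inl 0 ∨ a = Sum.inr 0 then 0 else v a)
      = iota m n (v ∘ Sum.map Fin.succ Fin.succ) a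
    rcases a with i | j
    · induction i using Fin.cases with
      | zero => simp [iota]
      | succ k => simp [iota, Fin.succ_ne_zero, Sum.map]
    · induction j using Fin.cases with
      | zero => simp [iota]
      | succ k => simp [iota, Fin.succ_ne_zero, Sum.map]
  have hgz : g = 0 := by
    rw [← hev_incl, hg, hev_subT, h0, AddMonoidAlgebra.mapDomain_zero]
  rw [← hg, hgz, map_zero]

end Transfer

lemma subT_all (f : Laur (m+1) (n+1)) (hsym : IsSym f)
    (h00 : subT (0 : Fin (m+1)) (0 : Fin (n+1)) f = 0)
    (i : Fin (m+1)) (j : Fin (n+1)) : subT i j f = 0 := by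
  have h := subT_perm (Equiv.swap i 0) (Equiv.swap j 0) i j f
  rw [hsym, Equiv.swap_apply_left, Equiv.swap_apply_left, h00,
    AddMonoidAlgebra.mapDomain_zero] at h
  exact h

lemma xinvy_comp (σ : Equiv.Perm (Fin m)) (τ : Equiv.Perm (Fin n)) (i : Fin m) (j : Fin n) :
    (xinvy i j) ∘ ⇑(Equiv.sumCongr σ τ) = xinvy (σ.symm i) (τ.symm j) := by
  classical
  funext a
  rcases a with b | b
  · show xinvy i j (Sum.inl (σ b)) = xinvy (σ.symm i) (τ.symm j) (Sum.inl b)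
    simp [xinvy, Equiv.apply_eq_iff_eq_symm_apply]
  · show xinvy i j (Sum.inr (τ b)) = xinvy (σ.symm i) (τ.symm j) (Sum.inr b)
    simp [xinvy, Equiv.apply_eq_iff_eq_symm_apply]

lemma permHom_single (σ : Equiv.Perm (Fin m)) (τ : Equiv.Perm (Fin n)) (v : XLat m n) (c : ℤ) :
    permHom σ τ (single v c) = single (v ∘ ⇑(Equiv.sumCongr σ τ)) c := by
  rw [perm_apply]; exact AddMonoidAlgebra.mapDomain_single

set_option maxHeartbeats 1000000 in
lemma permHom_P (σ : Equiv.Perm (Fin (m+1))) (τ : Equiv.Perm (Fin (n+1))) :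
    permHom σ τ (∏ i : Fin (m+1), ∏ j : Fin (n+1), (1 - single (xinvy i j) (1:ℤ)))
      = ∏ i : Fin (m+1), ∏ j : Fin (n+1), (1 - single (xinvy i j) (1:ℤ)) := by
  have step : ∀ i : Fin (m+1),
      permHom σ τ (∏ j : Fin (n+1), (1 - single (xinvy i j) (1:ℤ)))
        = ∏ j : Fin (n+1), (1 - single (xinvy (σ.symm i) (τ.symm j)) (1:ℤ)) := by
    intro i
    rw [map_prod]
    refine Finset.prod_congr rfl fun j _ => ?_
    rw [map_sub, map_one, permHom_single, xinvy_comp]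
  calc permHom σ τ (∏ i : Fin (m+1), ∏ j : Fin (n+1), (1 - single (xinvy i j) (1:ℤ)))
      = ∏ i : Fin (m+1), ∏ j : Fin (n+1),
          (1 - single (xinvy (σ.symm i) (τ.symm j)) (1:ℤ)) := by
        rw [map_prod]; exact Finset.prod_congr rfl fun i _ => step i
    _ = ∏ i : Fin (m+1), ∏ j : Fin (n+1), (1 - single (xinvy (σ.symm i) j) (1:ℤ)) :=
        Finset.prod_congr rfl fun i _ =>
          Equiv.prod_comp τ.symm (fun j => (1 - single (xinvy (σ.symm i) j) (1:ℤ)))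
    _ = ∏ i : Fin (m+1), ∏ j : Fin (n+1), (1 - single (xinvy i j) (1:ℤ)) :=
        Equiv.prod_comp σ.symm
          (fun i => ∏ j : Fin (n+1), (1 - single (xinvy i j) (1:ℤ)))

end KD

/-- if `f ∈ 𝒥_{m,n}` satisfies `f|_{x₁ = y₁ = 1} = 0`, then `f` is divisible
in the Laurent polynomial ring by `∏ᵢ∏ⱼ (1 - x_i^{-1} y_j)`, and the quotient is an
`S_m × S_n`-invariant Laurent polynomial. -/
theorem kernel_divisibility (m n : ℕ) (f : Laur (m+1) (n+1))
    (hf : f ∈ Jset (m+1) (n+1)) (h0 : subOne m n f = 0) :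
    ∃ g : Laur (m+1) (n+1), IsSym g ∧
      f = (∏ i : Fin (m+1), ∏ j : Fin (n+1),
            (1 - AddMonoidAlgebra.single (xinvy i j) (1 : ℤ))) * g := by
  classical
  obtain ⟨hsym, hsuper⟩ := hf
  have h00 := KD.subT00_eq_zero f hsuper h0
  have hall : ∀ (i : Fin (m+1)) (j : Fin (n+1)), subT i j f = 0 :=
    KD.subT_all f hsym h00
  have hdvd : ∀ (i : Fin (m+1)) (j : Fin (n+1)),
      (1 - AddMonoidAlgebra.single (xinvy i j) (1:ℤ)) ∣ f :=
    fun i j => KD.dvd_of_S_eq_zero (KD.S_of_subT i j f (hall i j))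
  have hProd : (∏ q : Fin (m+1) × Fin (n+1),
      (1 - AddMonoidAlgebra.single (xinvy q.1 q.2) (1:ℤ))) ∣ f := by
    refine KD.prod_primes_dvd Finset.univ _ (fun q _ => KD.prime_p q.1 q.2) ?_ f
      (fun q _ => hdvd q.1 q.2)
    intro q _ r _ hqr
    exact KD.not_dvd_p (by simpa using hqr.symm : (r.1, r.2) ≠ (q.1, q.2))
  have hEq : (∏ q : Fin (m+1) × Fin (n+1),
      (1 - AddMonoidAlgebra.single (xinvy q.1 q.2) (1:ℤ)))
      = ∏ i : Fin (m+1), ∏ j : Fin (n+1),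
          (1 - AddMonoidAlgebra.single (xinvy i j) (1:ℤ)) := by
    rw [← Finset.univ_product_univ]
    exact Finset.prod_product' Finset.univ Finset.univ
      (fun i j => (1 - AddMonoidAlgebra.single (xinvy i j) (1:ℤ)))
  rw [hEq] at hProd
  obtain ⟨g, hg⟩ := hProd
  refine ⟨g, ?_, hg⟩
  intro σ τ
  have hPne : (∏ i : Fin (m+1), ∏ j : Fin (n+1),
      (1 - AddMonoidAlgebra.single (xinvy i j) (1:ℤ))) ≠ 0 := by
    rw [Finset.prod_ne_zero_iff]
    intro i _
    rw [Finset.prod_ne_zero_iff]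
    intro j _
    exact (KD.prime_p i j).1
  have h1 : permHom σ τ f = f := hsym σ τ
  rw [hg, map_mul, KD.permHom_P] at h1
  exact mul_left_cancel₀ hPne h1
end
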